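/- Let H₁, H₂, D₁', D₂', R₁, R₂, P_L be real, T ≠ 0, T_g ≠ 0, D' := D₁'+D₂' ≠ 0, H := H₁+H₂, R := R₁+R₂, and define F₁(s) = (−2·H₂·P_L·s³ + (2·H₂·R₁/T_g − D₂'·P_L)·s² + (D₂'·R₁/T_g − P_L·T)·s + R·T/T_g) / (4·H₁·H₂·s⁵ + 2·(D₁'·H₂ + D₂'·H₁)·s⁴ + (2·H·T + D₁'·D₂')·s³ + D'·T·s²). Then the limit as s → 0 (s ≠ 0) of s·(F₁(s) − R/(D'·T_g·s²)) equals −(2·H·R + D'·T_g·P_L − D₂'·(R₁·D₂' − R₂·D₁')/T)/((D')²·T_g). -/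

import Mathlib

/-- The coefficient of the `1/s` term of `F₁(s)`: the limit as `s → 0` (`s ≠ 0`) of
`s·(F₁(s) − R/(D'·T_g·s²))` equals
`−(2HR + D'·T_g·P_L − D₂'·(R₁D₂' − R₂D₁')/T)/((D')²·T_g)`. -/
theorem stmt_13 (H₁ H₂ D₁ D₂ R₁ R₂ PL T Tg : ℝ)
    (hT : T ≠ 0) (hTg : Tg ≠ 0) (hD : D₁ + D₂ ≠ 0) :
    Filter.Tendsto
      (fun s : ℝ => s *
        ((-2 * H₂ * PL * s ^ 3 + (2 * H₂ * R₁ / Tg - D₂ * PL) * s ^ 2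
            + (D₂ * R₁ / Tg - PL * T) * s + (R₁ + R₂) * T / Tg)
          / (4 * H₁ * H₂ * s ^ 5 + 2 * (D₁ * H₂ + D₂ * H₁) * s ^ 4
            + (2 * (H₁ + H₂) * T + D₁ * D₂) * s ^ 3 + (D₁ + D₂) * T * s ^ 2)
          - (R₁ + R₂) / ((D₁ + D₂) * Tg * s ^ 2)))
      (nhdsWithin 0 {s : ℝ | s ≠ 0})
      (nhds (-(2 * (H₁ + H₂) * (R₁ + R₂) + (D₁ + D₂) * Tg * PL
          - D₂ * (R₁ * D₂ - R₂ * D₁) / T) / ((D₁ + D₂) ^ 2 * Tg))) := by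
  set Q : ℝ → ℝ := fun s => 4*H₁*H₂*s^3 + 2*(D₁*H₂+D₂*H₁)*s^2
      + (2*(H₁+H₂)*T+D₁*D₂)*s + (D₁+D₂)*T with hQdef
  set M : ℝ → ℝ := fun s =>
      (-2*H₂*PL*((D₁+D₂)*Tg) - (R₁+R₂)*(4*H₁*H₂))*s^2
      + ((2*H₂*R₁/Tg - D₂*PL)*((D₁+D₂)*Tg) - (R₁+R₂)*(2*(D₁*H₂+D₂*H₁)))*s
      + ((D₂*R₁/Tg - PL*T)*((D₁+D₂)*Tg) - (R₁+R₂)*(2*(H₁+H₂)*T+D₁*D₂)) with hMdef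
  have hQcont : Continuous Q := by rw [hQdef]; fun_prop
  have hMcont : Continuous M := by rw [hMdef]; fun_prop
  have hQ0 : Q 0 = (D₁+D₂)*T := by simp [hQdef]
  have hQ0ne : Q 0 ≠ 0 := by rw [hQ0]; exact mul_ne_zero hD hT
  have hg : Filter.Tendsto (fun s : ℝ => M s / ((D₁+D₂)*Tg*Q s))
      (nhdsWithin 0 {s : ℝ | s ≠ 0})
      (nhds (-(2 * (H₁ + H₂) * (R₁ + R₂) + (D₁ + D₂) * Tg * PL
          - D₂ * (R₁ * D₂ - R₂ * D₁) / T) / ((D₁ + D₂) ^ 2 * Tg))) := by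
    have h1 : Filter.Tendsto (fun s : ℝ => M s / ((D₁+D₂)*Tg*Q s)) (nhds 0)
        (nhds (M 0 / ((D₁+D₂)*Tg*Q 0))) := by
      apply Filter.Tendsto.div (hMcont.tendsto 0)
        ((continuous_const.mul hQcont).tendsto 0)
      exact mul_ne_zero (mul_ne_zero hD hTg) hQ0ne
    have heq : M 0 / ((D₁+D₂)*Tg*Q 0)
        = -(2 * (H₁ + H₂) * (R₁ + R₂) + (D₁ + D₂) * Tg * PL
          - D₂ * (R₁ * D₂ - R₂ * D₁) / T) / ((D₁ + D₂) ^ 2 * Tg) := by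
      rw [hQ0]; simp only [hMdef]
      field_simp
      ring
    rw [heq] at h1
    exact h1.mono_left nhdsWithin_le_nhds
  refine hg.congr' ?_
  have hQnhds : {s : ℝ | Q s ≠ 0} ∈ nhdsWithin 0 {s : ℝ | s ≠ 0} := by
    apply nhdsWithin_le_nhds
    exact (hQcont.isOpen_preimage {0}ᶜ isOpen_compl_singleton).mem_nhds hQ0ne
  filter_upwards [hQnhds, self_mem_nhdsWithin] with s hQs hs
  have hs : s ≠ 0 := hs
  have hden : (4 * H₁ * H₂ * s ^ 5 + 2 * (D₁ * H₂ + D₂ * H₁) * s ^ 4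
      + (2 * (H₁ + H₂) * T + D₁ * D₂) * s ^ 3 + (D₁ + D₂) * T * s ^ 2)
      = s^2 * Q s := by simp only [hQdef]; ring
  rw [hden]
  simp only [hMdef, hQdef] at *
  field_simp
  have hQs' : s * (s * (H₂ * 4 * H₁ * s + 2 * (H₂ * D₁ + D₂ * H₁)) + (2 * T * (H₁ + H₂) + D₁ * D₂))
      + (D₁ + D₂) * T ≠ 0 := by convert hQs using 1; ring
  rw [eq_sub_iff_add_eq, div_add' _ _ _ hQs', div_eq_div_iff hQs' hQs']
  ring
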